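/- arXiv:1805.02910 — 3 statements merged into one kernel-verified Lean document; each statement's English description precedes it below -/
import Mathlib

section
/- Let c, h, κ : ℝ → ℝ be continuous with κ(t) ≠ 0, and suppose x, y : ℝ → ℝ are twice differentiable with x(t) > 0, y(t) > 0, satisfying ẋ = c x (1 - x/κ) - h y and ẏ = y(1 - y/x), and y(t) - ẏ(t) > 0 for all t. Then y satisfies the second-order ODE ÿ + r ẏ + α y = β ẏ²/y + γ y², where r(t) = 1 + c(t) - 2h(t), α(t) = h(t) - c(t), β(t) = 2 - h(t), and γ(t) = -c(t)/κ(t). -/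
theorem basener_ross_reduction
    (c h κ : ℝ → ℝ) (hc : Continuous c) (hh : Continuous h) (hκ : Continuous κ)
    (hκne : ∀ t, κ t ≠ 0)
    (x y : ℝ → ℝ) (hx : ContDiff ℝ 2 x) (hy : ContDiff ℝ 2 y)
    (hxpos : ∀ t, x t > 0) (hypos : ∀ t, y t > 0)
    (hode1 : ∀ t, deriv x t = c t * x t * (1 - x t / κ t) - h t * y t)
    (hode2 : ∀ t, deriv y t = y t * (1 - y t / x t))
    (hpos : ∀ t, y t - deriv y t > 0) :
    ∀ t, deriv (deriv y) t + (1 + c t - 2 * h t) * deriv y t + (h t - c t) * y t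
      = (2 - h t) * (deriv y t)^2 / y t + (-(c t / κ t)) * (y t)^2 := by
  intro t
  have hxd : Differentiable ℝ x := hx.differentiable (by norm_num)
  have hyd : Differentiable ℝ y := hy.differentiable (by norm_num)
  have hxne : x t ≠ 0 := (hxpos t).ne'
  have hyne : y t ≠ 0 := (hypos t).ne'
  have hdy : HasDerivAt y (deriv y t) t := (hyd t).hasDerivAt
  have hdx : HasDerivAt x (deriv x t) t := (hxd t).hasDerivAt
  have hq : HasDerivAt (fun s => y s / x s)
      ((deriv y t * x t - y t * deriv x t) / (x t)^2) t := hdy.div hdx hxne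
  have h1 : HasDerivAt (fun s => y s * (1 - y s / x s))
      (deriv y t * (1 - y t / x t) +
        y t * (0 - (deriv y t * x t - y t * deriv x t) / (x t)^2)) t :=
    hdy.mul ((hasDerivAt_const t (1:ℝ)).sub hq)
  have h2 : deriv (deriv y) t = deriv (fun s => y s * (1 - y s / x s)) t := by
    rw [funext hode2]
  rw [h2, h1.deriv, hode1 t]
  have hdne : y t - deriv y t ≠ 0 := (hpos t).ne'
  have hxval : x t = y t ^ 2 / (y t - deriv y t) := by
    have h0 := hode2 t
    field_simp at h0 ⊢
    linear_combination -h0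
  rw [hxval]
  have hκt := hκne t
  field_simp [hdne, hyne, hκt]
  ring
end

section
/- Let n ≠ 1, σ = (n+3)/4, r : ℝ → ℝ continuous, and let φ(t) = exp((1/(2(σ-1))) ∫₀ᵗ r). If w = φ z where z : ℝ → ℝ is twice differentiable and positive and satisfies z̈ + (4/(1-n)) I(t) z = σ ż²/z + (4q/(1-n)) zⁿ with I(t) = p(t) - (1/4)(r(t)² + 2ṙ(t)), then w satisfies ẅ + r ẇ + (4p/(1-n)) w = σ ẇ²/w + (4q/(1-n)) exp(-2∫₀ᵗ r) wⁿ. -/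
theorem dissipative_kummer_schwarz_transform
    (n σ q : ℝ) (hn : n ≠ 1) (hn' : n ≠ -1) (hσ : σ = (n + 3) / 4)
    (r p : ℝ → ℝ) (hr : ContDiff ℝ 1 r) (hp : Differentiable ℝ p)
    (z w : ℝ → ℝ) (hz : ContDiff ℝ 2 z) (hzpos : ∀ t, z t > 0)
    (hzode : ∀ t, deriv (deriv z) t
        + (4 / (1 - n)) * (p t - (1/4) * ((r t)^2 + 2 * deriv r t)) * z t
      = σ * (deriv z t)^2 / z t + (4 * q / (1 - n)) * (z t) ^ n)
    (hw : ∀ t, w t = Real.exp ((1 / (2 * (σ - 1))) * ∫ s in (0:ℝ)..t, r s) * z t) :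
    ∀ t, deriv (deriv w) t + r t * deriv w t + (4 * p t / (1 - n)) * w t
      = σ * (deriv w t)^2 / w t
        + (4 * q / (1 - n)) * Real.exp (-2 * ∫ s in (0:ℝ)..t, r s) * (w t) ^ n := by
  subst hσ
  have hn1 : n - 1 ≠ 0 := sub_ne_zero.mpr hn
  have h1n : (1 : ℝ) - n ≠ 0 := fun h => hn (by linarith)
  intro t
  set c : ℝ := 1 / (2 * ((n + 3) / 4 - 1)) with hcdef
  have hc : c = 2 / (n - 1) := by
    rw [hcdef]
    rw [div_eq_div_iff (by intro h; apply hn1; nlinarith [h]) hn1]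
    ring
  have hc2 : c * (n - 1) = 2 := by rw [hc]; field_simp
  set R : ℝ → ℝ := fun u => ∫ s in (0:ℝ)..u, r s with hRdef
  have hRd : ∀ x, HasDerivAt R (r x) x := fun x =>
    intervalIntegral.integral_hasDerivAt_right (hr.continuous.intervalIntegrable _ _)
      (hr.continuous.stronglyMeasurableAtFilter _ _) hr.continuous.continuousAt
  have hz1 : ∀ x, HasDerivAt z (deriv z x) x := fun x =>
    ((hz.differentiable (by norm_num)) x).hasDerivAt
  have hzC1 : ContDiff ℝ 1 (deriv z) := by
    have h2 : ContDiff ℝ ((1:ℕ)+1) z := by exact_mod_cast hz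
    exact_mod_cast (contDiff_succ_iff_deriv.mp h2).2.2
  have hz2 : ∀ x, HasDerivAt (deriv z) (deriv (deriv z) x) x := fun x =>
    ((hzC1.differentiable one_ne_zero) x).hasDerivAt
  have hr1 : ∀ x, HasDerivAt r (deriv r x) x := fun x =>
    ((hr.differentiable one_ne_zero) x).hasDerivAt
  have hE : ∀ x, HasDerivAt (fun u => Real.exp (c * R u))
      (Real.exp (c * R x) * (c * r x)) x := fun x => ((hRd x).const_mul c).exp
  have hwfun : w = fun u => Real.exp (c * R u) * z u := funext hw
  have hdw : deriv w = fun u =>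
      Real.exp (c * R u) * (c * r u) * z u + Real.exp (c * R u) * deriv z u := by
    funext x
    rw [hwfun]
    exact ((hE x).mul (hz1 x)).deriv
  have h1 : HasDerivAt (fun u => Real.exp (c * R u) * (c * r u))
      (Real.exp (c * R t) * (c * r t) * (c * r t)
        + Real.exp (c * R t) * (c * deriv r t)) t :=
    (hE t).mul ((hr1 t).const_mul c)
  have hddw : deriv (deriv w) t =
      ((Real.exp (c * R t) * (c * r t) * (c * r t)
          + Real.exp (c * R t) * (c * deriv r t)) * z t
        + Real.exp (c * R t) * (c * r t) * deriv z t)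
      + (Real.exp (c * R t) * (c * r t) * deriv z t
        + Real.exp (c * R t) * deriv (deriv z) t) := by
    rw [hdw]
    exact ((h1.mul (hz1 t)).add ((hE t).mul (hz2 t))).deriv
  have hpow : Real.exp (-2 * R t) * (Real.exp (c * R t) * z t) ^ n
      = Real.exp (c * R t) * z t ^ n := by
    rw [Real.mul_rpow (Real.exp_pos _).le (hzpos t).le,
      Real.rpow_def_of_pos (Real.exp_pos _), Real.log_exp, ← mul_assoc,
      ← Real.exp_add]
    congr 2
    linear_combination R t * hc2
  have hZ : z t ≠ 0 := ne_of_gt (hzpos t)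
  have hEne : Real.exp (c * R t) ≠ 0 := Real.exp_ne_zero _
  have hZ'' : deriv (deriv z) t
      = (n + 3) / 4 * (deriv z t)^2 / z t + (4 * q / (1 - n)) * (z t) ^ n
        - (4 / (1 - n)) * (p t - (1/4) * ((r t)^2 + 2 * deriv r t)) * z t := by
    linarith [hzode t]
  rw [hddw, hdw, hwfun]
  simp only
  rw [mul_assoc ((4:ℝ) * q / (1 - n)), hpow, hZ'', hc]
  field_simp
  ring
end

section
/- Let n ≠ 1, σ = (n+3)/4, and let u, v be twice differentiable solutions of z̈ + I(t) z = 0 with constant Wronskian W = u v̇ - v u̇ ≠ 0. Let A, B, C be constants with (AC - B²)W² = q, and suppose A u(t)² + 2B u(t)v(t) + C v(t)² > 0 for all t. Then z(t) = (A u² + 2B u v + C v²)^{2/(1-n)} satisfies z̈ + (4/(1-n)) I z = σ ż²/z + (4q/(1-n)) zⁿ. -/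
theorem ermakov_pinney_superposition
    (n σ q W A B C : ℝ) (hn : n ≠ 1) (hσ : σ = (n + 3) / 4)
    (I u v : ℝ → ℝ) (hu : ContDiff ℝ 2 u) (hv : ContDiff ℝ 2 v)
    (huode : ∀ t, deriv (deriv u) t + I t * u t = 0)
    (hvode : ∀ t, deriv (deriv v) t + I t * v t = 0)
    (hW : ∀ t, u t * deriv v t - v t * deriv u t = W) (hWne : W ≠ 0)
    (hq : (A * C - B^2) * W^2 = q)
    (hQpos : ∀ t, A * (u t)^2 + 2 * B * u t * v t + C * (v t)^2 > 0)
    (z : ℝ → ℝ)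
    (hz : ∀ t, z t = (A * (u t)^2 + 2 * B * u t * v t + C * (v t)^2) ^ (2 / (1 - n))) :
    ∀ t, deriv (deriv z) t + (4 / (1 - n)) * I t * z t
      = σ * (deriv z t)^2 / z t + (4 * q / (1 - n)) * (z t) ^ n := by
  have h1n : (1:ℝ) - n ≠ 0 := sub_ne_zero.mpr (Ne.symm hn)
  -- differentiability facts
  have hud : Differentiable ℝ u := hu.differentiable (by norm_num)
  have hvd : Differentiable ℝ v := hv.differentiable (by norm_num)
  have hud2 : Differentiable ℝ (deriv u) := by
    have h2 : ContDiff ℝ ((1 : WithTop ℕ∞) + 1) u := by norm_num; exact hu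
    exact ((contDiff_succ_iff_deriv.mp h2).2.2).differentiable (by norm_num)
  have hvd2 : Differentiable ℝ (deriv v) := by
    have h2 : ContDiff ℝ ((1 : WithTop ℕ∞) + 1) v := by norm_num; exact hv
    exact ((contDiff_succ_iff_deriv.mp h2).2.2).differentiable (by norm_num)
  set α : ℝ := 2 / (1 - n) with hα
  set Q : ℝ → ℝ := fun s => A * (u s)^2 + 2 * B * u s * v s + C * (v s)^2 with hQdef
  set Q' : ℝ → ℝ := fun s =>
    2*A*(u s)*(deriv u s) + 2*B*((deriv u s)*(v s) + (u s)*(deriv v s))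
      + 2*C*(v s)*(deriv v s) with hQ'def
  set Q'' : ℝ → ℝ := fun s =>
    2*A*((deriv u s)^2 + (u s)*(deriv (deriv u) s))
      + 2*B*((deriv (deriv u) s)*(v s) + 2*(deriv u s)*(deriv v s) + (u s)*(deriv (deriv v) s))
      + 2*C*((deriv v s)^2 + (v s)*(deriv (deriv v) s)) with hQ''def
  have hQpos' : ∀ s, 0 < Q s := fun s => hQpos s
  have hQd : ∀ s, HasDerivAt Q (Q' s) s := by
    intro s
    have h1 := (hud s).hasDerivAt
    have h2 := (hvd s).hasDerivAt
    have h := (((h1.pow 2).const_mul A).add ((h1.const_mul (2*B)).mul h2)).add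
        ((h2.pow 2).const_mul C)
    refine h.congr_deriv ?_
    simp only [hQ'def]
    push_cast
    ring
  have hQ'd : ∀ s, HasDerivAt Q' (Q'' s) s := by
    intro s
    have h1 := (hud s).hasDerivAt
    have h2 := (hvd s).hasDerivAt
    have h1' := (hud2 s).hasDerivAt
    have h2' := (hvd2 s).hasDerivAt
    have h := (((h1.const_mul (2*A)).mul h1').add
        (((h1'.mul h2).add (h1.mul h2')).const_mul (2*B))).add
        ((h2.const_mul (2*C)).mul h2')
    refine h.congr_deriv ?_
    simp only [hQ''def]
    ring
  have hzg : z = fun s => Q s ^ α := funext hz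
  subst hzg
  intro t
  have hQne : ∀ s, Q s ≠ 0 := fun s => (hQpos' s).ne'
  have hg1 : ∀ s, HasDerivAt (fun s => Q s ^ α) (Q' s * α * Q s ^ (α - 1)) s :=
    fun s => (hQd s).rpow_const (Or.inl (hQne s))
  have hderiv1 : deriv (fun s => Q s ^ α) = fun s => Q' s * α * Q s ^ (α - 1) :=
    funext fun s => (hg1 s).deriv
  have hg2 : HasDerivAt (fun s => Q' s * α * Q s ^ (α - 1))
      (Q'' t * α * Q t ^ (α - 1) + (Q' t * α) * (Q' t * (α - 1) * Q t ^ (α - 1 - 1))) t := by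
    exact ((hQ'd t).mul_const α).mul ((hQd t).rpow_const (Or.inl (hQne t)))
  have hderiv2 : deriv (deriv (fun s => Q s ^ α)) t
      = Q'' t * α * Q t ^ (α - 1) + (Q' t * α) * (Q' t * (α - 1) * Q t ^ (α - 1 - 1)) := by
    rw [hderiv1]; exact hg2.deriv
  rw [hderiv2, hderiv1]
  -- rpow algebra
  set E : ℝ := Q t ^ (α - 2) with hE
  have hEpos : 0 < E := Real.rpow_pos_of_pos (hQpos' t) _
  have e1 : Q t ^ (α - 1) = E * Q t := by
    rw [hE, ← Real.rpow_add_one (hQne t)]; ring_nf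
  have e11 : α - 1 - 1 = α - 2 := by ring
  have e2 : Q t ^ α = E * Q t * Q t := by
    rw [← e1, ← Real.rpow_add_one (hQne t)]; ring_nf
  have e3 : (Q t ^ α) ^ n = E := by
    rw [← Real.rpow_mul (hQpos' t).le, hE]
    congr 1
    rw [hα]; field_simp; ring
  beta_reduce
  rw [e11, e1, e3, e2, ← hE]
  -- key Wronskian identity
  have hkey : 4 * Q t * (A*(deriv u t)^2 + 2*B*(deriv u t)*(deriv v t) + C*(deriv v t)^2)
      - (Q' t)^2 = 4 * q := by
    have h : 4 * Q t * (A*(deriv u t)^2 + 2*B*(deriv u t)*(deriv v t) + C*(deriv v t)^2)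
        - (Q' t)^2 = 4 * ((A*C - B^2) * (u t * deriv v t - v t * deriv u t)^2) := by
      simp only [hQdef, hQ'def]; ring
    rw [h, hW t, hq]
  -- substitute second derivatives of u, v
  have hu2 : deriv (deriv u) t = -(I t * u t) := by linarith [huode t]
  have hv2 : deriv (deriv v) t = -(I t * v t) := by linarith [hvode t]
  have hQ''val : Q'' t = 2 * (A*(deriv u t)^2 + 2*B*(deriv u t)*(deriv v t) + C*(deriv v t)^2)
      - 2 * I t * Q t := by
    simp only [hQ''def, hQdef, hu2, hv2]; ring
  have hdiv : σ * (Q' t * α * (E * Q t))^2 / (E * Q t * Q t) = σ * α^2 * (Q' t)^2 * E := by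
    rw [div_eq_iff (by exact mul_ne_zero (mul_ne_zero hEpos.ne' (hQne t)) (hQne t))]
    ring
  rw [hdiv, hQ''val, hσ, hα]
  field_simp
  linear_combination (4 * (1-n)) * hkey
end
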